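/- Let δ > 0 and (s_k) be positive reals with s_{k+1} ≥ (1+δ)s_k. Define for t > 0 and indices k, j the quantity a_{k,j} = exp(−t d_{k,j}) (1 − exp(−t s_k)) (1 − exp(−t s_j)), where d_{k,j} ≥ δ·max(s_k, s_j) for k ≠ j and d_{k,k} ≥ 0. Then sup_j ∑_k a_{k,j} ≤ c_δ for a constant c_δ depending only on δ (one may take c_δ = 1 + δ^{-1} + 1/(1 − e^{−δ²}) + 1). -/

import Mathlib

theorem schur_row_sum_bound (δ : ℝ) (hδ : 0 < δ) (s : ℕ → ℝ)
    (hs0 : ∀ k, 0 < s k) (hgrow : ∀ k, (1 + δ) * s k ≤ s (k + 1))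
    (d : ℕ → ℕ → ℝ) (hd0 : ∀ k j, 0 ≤ d k j)
    (hdsep : ∀ k j, k ≠ j → δ * max (s k) (s j) ≤ d k j)
    (t : ℝ) (ht : 0 < t)
    (a : ℕ → ℕ → ℝ)
    (ha : ∀ k j, a k j =
      Real.exp (-(t * d k j)) * (1 - Real.exp (-(t * s k))) * (1 - Real.exp (-(t * s j)))) :
    ∀ j : ℕ, (∑' k : ℕ, a k j) ≤ 1 + δ⁻¹ + 1 / (1 - Real.exp (-δ ^ 2)) + 1 := by
  intro j
  set q : ℝ := Real.exp (-δ ^ 2) with hq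
  have hq0 : 0 ≤ q := (Real.exp_pos _).le
  have hq1 : q < 1 := Real.exp_lt_one_iff.mpr (by nlinarith)
  have h1q : 0 < 1 - q := by linarith
  set r : ℝ := (1 + δ)⁻¹ with hr
  have hr0 : 0 ≤ r := by positivity
  have hr1 : r < 1 := by
    rw [hr, inv_lt_one_iff₀]; right; linarith
  have hRHSpos : (0:ℝ) ≤ 1 + δ⁻¹ + 1 / (1 - q) + 1 := by
    have h1 : 0 ≤ δ⁻¹ := by positivity
    have h2 : 0 ≤ 1 / (1 - q) := by positivity
    linarith
  -- basic facts about the factors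
  have hfac : ∀ x : ℝ, 0 ≤ x → 0 ≤ 1 - Real.exp (-x) ∧ 1 - Real.exp (-x) ≤ 1 := by
    intro x hx
    constructor
    · have : Real.exp (-x) ≤ 1 := Real.exp_le_one_iff.mpr (by linarith)
      linarith
    · have := Real.exp_pos (-x); linarith
  have ha0 : ∀ k, 0 ≤ a k j := by
    intro k
    rw [ha]
    have h1 := (hfac _ (mul_nonneg ht.le (hs0 k).le)).1
    have h2 := (hfac _ (mul_nonneg ht.le (hs0 j).le)).1
    have h3 := (Real.exp_pos (-(t * d k j))).le
    positivity
  have ha1 : ∀ k, a k j ≤ 1 := by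
    intro k
    rw [ha]
    have h1 := hfac _ (mul_nonneg ht.le (hs0 k).le)
    have h2 := hfac _ (mul_nonneg ht.le (hs0 j).le)
    have h3 : Real.exp (-(t * d k j)) ≤ 1 :=
      Real.exp_le_one_iff.mpr (by have := mul_nonneg ht.le (hd0 k j); linarith)
    have h3' := (Real.exp_pos (-(t * d k j))).le
    exact mul_le_one₀ (mul_le_one₀ h3 h1.1 h1.2) h2.1 h2.2
  -- geometric growth of s
  have hx : ∀ k m : ℕ, (1 + δ) ^ m * s k ≤ s (k + m) := by
    intro k m
    induction m with
    | zero => simp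
    | succ m ih =>
      calc (1 + δ) ^ (m + 1) * s k = (1 + δ) * ((1 + δ) ^ m * s k) := by ring
        _ ≤ (1 + δ) * s (k + m) := mul_le_mul_of_nonneg_left ih (by linarith)
        _ ≤ s (k + m + 1) := hgrow (k + m)
  have hex : ∃ k, 1 < t * s k := by
    obtain ⟨n, hn⟩ := pow_unbounded_of_one_lt ((t * s 0)⁻¹) (by linarith : (1:ℝ) < 1 + δ)
    refine ⟨n, ?_⟩
    have h0 : 0 < t * s 0 := mul_pos ht (hs0 0)
    have h1 : (t * s 0)⁻¹ * (t * s 0) < (1 + δ) ^ n * (t * s 0) :=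
      mul_lt_mul_of_pos_right hn h0
    rw [inv_mul_cancel₀ (ne_of_gt h0)] at h1
    calc (1:ℝ) < (1 + δ) ^ n * (t * s 0) := h1
      _ = t * ((1 + δ) ^ n * s 0) := by ring
      _ ≤ t * s n := by
          apply mul_le_mul_of_nonneg_left _ ht.le
          simpa using hx 0 n
  set k0 : ℕ := Nat.find hex with hk0
  have hk0spec : 1 < t * s k0 := Nat.find_spec hex
  have hk0min : ∀ k, k < k0 → t * s k ≤ 1 := by
    intro k hk
    have := Nat.find_min hex hk
    linarith [not_lt.mp this]
  -- pointwise majorant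
  have hMle : ∀ k, a k j ≤ (if k = j then (1:ℝ) else 0)
      + (if k < k0 then r ^ (k0 - 1 - k) else 0)
      + (if k0 ≤ k then q ^ (k - k0) else 0) := by
    intro k
    have hA0 : (0:ℝ) ≤ (if k = j then (1:ℝ) else 0) := by positivity
    have hB0 : (0:ℝ) ≤ (if k < k0 then r ^ (k0 - 1 - k) else 0) := by positivity
    have hC0 : (0:ℝ) ≤ (if k0 ≤ k then q ^ (k - k0) else 0) := by positivity
    by_cases hkj : k = j
    · rw [if_pos hkj]
      have := ha1 k
      linarith
    · have hdk : δ * s k ≤ d k j := by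
        have h1 := hdsep k j hkj
        have h2 : δ * s k ≤ δ * max (s k) (s j) :=
          mul_le_mul_of_nonneg_left (le_max_left _ _) hδ.le
        linarith
      have h1 := hfac _ (mul_nonneg ht.le (hs0 k).le)
      have h2 := hfac _ (mul_nonneg ht.le (hs0 j).le)
      have h3' := (Real.exp_pos (-(t * d k j))).le
      have h3 : Real.exp (-(t * d k j)) ≤ 1 :=
        Real.exp_le_one_iff.mpr (by have := mul_nonneg ht.le (hd0 k j); linarith)
      rcases lt_or_ge k k0 with hk | hk
      · -- small regime: a k j ≤ t * s k ≤ r ^ (k0-1-k)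
        have haux : a k j ≤ t * s k := by
          rw [ha]
          have hmid : 1 - Real.exp (-(t * s k)) ≤ t * s k := by
            have := Real.add_one_le_exp (-(t * s k)); linarith
          have hts : 0 ≤ t * s k := mul_nonneg ht.le (hs0 k).le
          calc Real.exp (-(t * d k j)) * (1 - Real.exp (-(t * s k))) * (1 - Real.exp (-(t * s j)))
              ≤ 1 * (t * s k) * 1 := by
                apply mul_le_mul _ h2.2 h2.1 (by positivity)
                apply mul_le_mul h3 hmid h1.1 zero_le_one
            _ = t * s k := by ring
        have hbd : t * s k ≤ r ^ (k0 - 1 - k) := by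
          have hkk : k + (k0 - 1 - k) = k0 - 1 := by omega
          have hgrow' : (1 + δ) ^ (k0 - 1 - k) * (t * s k) ≤ t * s (k0 - 1) := by
            have hy := hx k (k0 - 1 - k)
            rw [hkk] at hy
            calc (1 + δ) ^ (k0 - 1 - k) * (t * s k)
                = t * ((1 + δ) ^ (k0 - 1 - k) * s k) := by ring
              _ ≤ t * s (k0 - 1) := mul_le_mul_of_nonneg_left hy ht.le
          have hsm : t * s (k0 - 1) ≤ 1 := hk0min _ (by omega)
          have hpow : (0:ℝ) < (1 + δ) ^ (k0 - 1 - k) := by positivity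
          have hle1 : (1 + δ) ^ (k0 - 1 - k) * (t * s k) ≤ 1 := le_trans hgrow' hsm
          calc t * s k = ((1 + δ) ^ (k0 - 1 - k))⁻¹ * ((1 + δ) ^ (k0 - 1 - k) * (t * s k)) := by
                field_simp
            _ ≤ ((1 + δ) ^ (k0 - 1 - k))⁻¹ * 1 :=
                mul_le_mul_of_nonneg_left hle1 (by positivity)
            _ = r ^ (k0 - 1 - k) := by rw [hr, inv_pow, mul_one]
        rw [if_neg hkj, if_pos hk, if_neg (by omega : ¬ k0 ≤ k)]
        linarith [le_trans haux hbd]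
      · -- large regime: a k j ≤ exp(-(t d)) ≤ q ^ (k - k0)
        have haux : a k j ≤ Real.exp (-(t * d k j)) := by
          rw [ha]
          calc Real.exp (-(t * d k j)) * (1 - Real.exp (-(t * s k))) * (1 - Real.exp (-(t * s j)))
              ≤ Real.exp (-(t * d k j)) * 1 * 1 := by
                apply mul_le_mul _ h2.2 h2.1 (by positivity)
                apply mul_le_mul le_rfl h1.2 h1.1 h3'
            _ = Real.exp (-(t * d k j)) := by ring
        have hE : Real.exp (-(t * d k j)) ≤ q ^ (k - k0) := by
          have hxk : (1 + δ) ^ (k - k0) * (t * s k0) ≤ t * s k := by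
            have hy := hx k0 (k - k0)
            rw [Nat.add_sub_cancel' hk] at hy
            calc (1 + δ) ^ (k - k0) * (t * s k0) = t * ((1 + δ) ^ (k - k0) * s k0) := by ring
              _ ≤ t * s k := mul_le_mul_of_nonneg_left hy ht.le
          have hb : (1:ℝ) + (k - k0 : ℕ) * δ ≤ (1 + δ) ^ (k - k0) :=
            one_add_mul_le_pow (by linarith) _
          have hpow : (0:ℝ) ≤ (1 + δ) ^ (k - k0) := by positivity
          have hlow : 1 + (k - k0 : ℕ) * δ ≤ t * s k := by
            nlinarith [mul_le_mul_of_nonneg_left hk0spec.le hpow]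
          have hexp : -(t * d k j) ≤ ((k - k0 : ℕ) : ℝ) * (-δ ^ 2) := by
            have hm : t * (δ * s k) ≤ t * d k j :=
              mul_le_mul_of_nonneg_left hdk ht.le
            nlinarith [mul_le_mul_of_nonneg_left hlow hδ.le]
          calc Real.exp (-(t * d k j)) ≤ Real.exp (((k - k0 : ℕ) : ℝ) * (-δ ^ 2)) :=
                Real.exp_le_exp.mpr hexp
            _ = q ^ (k - k0) := Real.exp_nat_mul _ _
        rw [if_neg hkj, if_neg (by omega : ¬ k < k0), if_pos hk]
        linarith [le_trans haux hE]
  -- partial sums of the majorant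
  have hsumM : ∀ n, (∑ k ∈ Finset.range n, ((if k = j then (1:ℝ) else 0)
      + (if k < k0 then r ^ (k0 - 1 - k) else 0)
      + (if k0 ≤ k then q ^ (k - k0) else 0))) ≤ 1 + δ⁻¹ + 1 / (1 - q) + 1 := by
    intro n
    rw [Finset.sum_add_distrib, Finset.sum_add_distrib]
    have hA : ∑ k ∈ Finset.range n, (if k = j then (1:ℝ) else 0) ≤ 1 := by
      rw [Finset.sum_ite_eq']
      split <;> norm_num
    have hB : ∑ k ∈ Finset.range n, (if k < k0 then r ^ (k0 - 1 - k) else 0) ≤ 1 + δ⁻¹ := by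
      have hsub : ∑ k ∈ Finset.range n, (if k < k0 then r ^ (k0 - 1 - k) else (0:ℝ))
          ≤ ∑ k ∈ Finset.range (n + k0), (if k < k0 then r ^ (k0 - 1 - k) else 0) := by
        apply Finset.sum_le_sum_of_subset_of_nonneg
        · exact Finset.range_subset_range.mpr (by omega)
        · intro i _ _; positivity
      have heq : ∑ k ∈ Finset.range (n + k0), (if k < k0 then r ^ (k0 - 1 - k) else (0:ℝ))
          = ∑ k ∈ Finset.range k0, r ^ (k0 - 1 - k) := by
        rw [← Finset.sum_subset (Finset.range_subset_range.mpr (by omega : k0 ≤ n + k0))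
          (fun k _ hk => if_neg (by simpa using hk))]
        exact Finset.sum_congr rfl fun k hk => if_pos (Finset.mem_range.mp hk)
      have hrefl : ∑ k ∈ Finset.range k0, r ^ (k0 - 1 - k) = ∑ k ∈ Finset.range k0, r ^ k :=
        Finset.sum_range_reflect (fun k => r ^ k) k0
      have hgeom : ∑ k ∈ Finset.range k0, r ^ k ≤ (1 - r)⁻¹ := by
        calc ∑ k ∈ Finset.range k0, r ^ k ≤ ∑' k : ℕ, r ^ k :=
              Summable.sum_le_tsum _ (fun i _ => by positivity) (summable_geometric_of_lt_one hr0 hr1)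
          _ = (1 - r)⁻¹ := tsum_geometric_of_lt_one hr0 hr1
      have hval : (1 - r)⁻¹ = 1 + δ⁻¹ := by
        rw [hr]
        rw [inv_eq_iff_eq_inv]
        field_simp
        ring
      calc ∑ k ∈ Finset.range n, (if k < k0 then r ^ (k0 - 1 - k) else (0:ℝ))
          ≤ ∑ k ∈ Finset.range k0, r ^ (k0 - 1 - k) := heq ▸ hsub
        _ = ∑ k ∈ Finset.range k0, r ^ k := hrefl
        _ ≤ (1 - r)⁻¹ := hgeom
        _ = 1 + δ⁻¹ := hval
    have hC : ∑ k ∈ Finset.range n, (if k0 ≤ k then q ^ (k - k0) else 0) ≤ 1 / (1 - q) := by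
      rcases le_or_gt n k0 with hn | hn
      · have hz : ∑ k ∈ Finset.range n, (if k0 ≤ k then q ^ (k - k0) else (0:ℝ)) = 0 :=
          Finset.sum_eq_zero fun k hk =>
            if_neg (by have := Finset.mem_range.mp hk; omega)
        rw [hz]; positivity
      · have hsplit : ∑ k ∈ Finset.range n, (if k0 ≤ k then q ^ (k - k0) else (0:ℝ))
            = ∑ k ∈ Finset.Ico k0 n, q ^ (k - k0) := by
          rw [Finset.range_eq_Ico,
            ← Finset.sum_Ico_consecutive _ (Nat.zero_le k0) hn.le]
          have h1 : ∑ k ∈ Finset.Ico 0 k0, (if k0 ≤ k then q ^ (k - k0) else (0:ℝ)) = 0 :=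
            Finset.sum_eq_zero fun k hk =>
              if_neg (by have := (Finset.mem_Ico.mp hk).2; omega)
          have h2 : ∑ k ∈ Finset.Ico k0 n, (if k0 ≤ k then q ^ (k - k0) else (0:ℝ))
              = ∑ k ∈ Finset.Ico k0 n, q ^ (k - k0) :=
            Finset.sum_congr rfl fun k hk => if_pos (Finset.mem_Ico.mp hk).1
          rw [h1, h2, zero_add]
        rw [hsplit, Finset.sum_Ico_eq_sum_range]
        have hre : ∑ k ∈ Finset.range (n - k0), q ^ (k0 + k - k0)
            = ∑ k ∈ Finset.range (n - k0), q ^ k :=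
          Finset.sum_congr rfl fun k _ => by congr 1; omega
        rw [hre]
        calc ∑ k ∈ Finset.range (n - k0), q ^ k ≤ ∑' k : ℕ, q ^ k :=
              Summable.sum_le_tsum _ (fun i _ => by positivity) (summable_geometric_of_lt_one hq0 hq1)
          _ = (1 - q)⁻¹ := tsum_geometric_of_lt_one hq0 hq1
          _ = 1 / (1 - q) := (one_div _).symm
    linarith
  by_cases hsum : Summable (fun k => a k j)
  · apply Summable.tsum_le_of_sum_range_le hsum
    intro n
    calc ∑ k ∈ Finset.range n, a k j
        ≤ ∑ k ∈ Finset.range n, ((if k = j then (1:ℝ) else 0)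
            + (if k < k0 then r ^ (k0 - 1 - k) else 0)
            + (if k0 ≤ k then q ^ (k - k0) else 0)) :=
          Finset.sum_le_sum fun k _ => hMle k
      _ ≤ _ := hsumM n
  · rw [tsum_eq_zero_of_not_summable hsum]
    exact hRHSpos
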